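/- Let Z be a nonnegative real-valued random variable on a probability space, let K > 0, and suppose that for every integer n ≥ 1, Z^n is integrable with E[Z^n] ≤ c(n) K^n. Then for every ε > 0, P(Z ≥ ε/2) ≤ (1 + 4√(2π) ε / K) · e^{−ε² / (2K²)}. -/

import Mathlib

open MeasureTheory Real
open scoped ENNReal

set_option maxHeartbeats 1000000

/-- The constant `c(p)`: `c(1) = 1` and `c(p) = 2^{-p/2} p Γ(p/2)` for `p > 1`. -/
noncomputable def cConst (p : ℝ) : ℝ :=
  if p = 1 then 1 else 2 ^ (-p / 2) * p * Real.Gamma (p / 2)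

lemma two_rpow_neg_half (n : ℕ) : (2:ℝ) ^ (-(n:ℝ)/2) = (Real.sqrt (2^n))⁻¹ := by
  rw [neg_div, Real.rpow_neg (by norm_num : (0:ℝ) ≤ 2)]
  congr 1
  rw [Real.sqrt_eq_rpow, ← Real.rpow_natCast 2 n, ← Real.rpow_mul (by norm_num : (0:ℝ) ≤ 2)]
  ring_nf

lemma sqrt_two_pow_odd (j : ℕ) : Real.sqrt (2^(2*j+1)) = Real.sqrt 2 * 2^j := by
  have : (2:ℝ)^(2*j+1) = 2 * (2^j)^2 := by
    rw [pow_succ, mul_comm 2 j, pow_mul]; ring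
  rw [this, Real.sqrt_mul (by norm_num), Real.sqrt_sq (by positivity)]

lemma sqrt_two_pow_even (m : ℕ) : Real.sqrt (2^(2*m)) = 2^m := by
  rw [mul_comm 2 m, pow_mul]
  exact Real.sqrt_sq (by positivity : (0:ℝ) ≤ 2^m)

lemma sixteen_pow_le (m : ℕ) (hm : 1 ≤ m) :
    16 ^ m ≤ 4 * m * (Nat.centralBinom m) ^ 2 := by
  induction m with
  | zero => omega
  | succ k ih =>
    rcases Nat.eq_or_lt_of_le hm with h | h
    · obtain rfl : k = 0 := by omega
      decide
    · have hk : 1 ≤ k := by omega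
      have ihk := ih hk
      have key := Nat.succ_mul_centralBinom_succ k
      -- (k+1) * centralBinom (k+1) = 2 * (2k+1) * centralBinom k
      have h1 : ((k+1) * Nat.centralBinom (k+1))^2 = (2*(2*k+1))^2 * (Nat.centralBinom k)^2 := by
        rw [key]; ring
      have h2 : 16 ^ (k+1) * (k+1)^2 ≤ 4 * (k+1) * ((k+1) * Nat.centralBinom (k+1))^2 := by
        rw [h1]
        calc 16 ^ (k+1) * (k+1)^2 = 16 ^ k * (16 * (k+1)^2) := by ring
          _ ≤ (4 * k * (Nat.centralBinom k)^2) * (16 * (k+1)^2) := by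
              exact Nat.mul_le_mul_right _ ihk
          _ ≤ 4 * (k+1) * ((2*(2*k+1))^2 * (Nat.centralBinom k)^2) := by
              have : 4 * k * (16 * (k+1)^2) ≤ 4 * (k+1) * (2*(2*k+1))^2 := by nlinarith
              nlinarith [sq_nonneg (Nat.centralBinom k)]
      have h3 : 16 ^ (k+1) * (k+1)^2 ≤ (4 * (k+1) * (Nat.centralBinom (k+1))^2) * (k+1)^2 := by
        calc 16 ^ (k+1) * (k+1)^2 ≤ 4 * (k+1) * ((k+1) * Nat.centralBinom (k+1))^2 := h2
          _ = (4 * (k+1) * (Nat.centralBinom (k+1))^2) * (k+1)^2 := by ring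
      exact Nat.le_of_mul_le_mul_right h3 (by positivity)

lemma Gamma_nat_add_half' (m : ℕ) :
    Real.Gamma (m + 1/2) = Real.sqrt π * (2*m).factorial / (4^m * m.factorial) := by
  induction m with
  | zero =>
    simp only [Nat.cast_zero, zero_add, Nat.mul_zero, Nat.factorial_zero, pow_zero]
    rw [Real.Gamma_one_half_eq]; simp
  | succ k ih =>
    have hne : (k : ℝ) + 1/2 ≠ 0 := by positivity
    have : ((k:ℝ) + 1) + 1/2 = ((k:ℝ) + 1/2) + 1 := by ring
    rw [Nat.cast_succ, this, Real.Gamma_add_one hne, ih]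
    have h4 : (0:ℝ) < 4 ^ k := by positivity
    have hkf : (0:ℝ) < (k.factorial : ℝ) := by positivity
    have h2k : (2*(k+1)) = (2*k+1)+1 := by ring
    rw [h2k]
    push_cast [Nat.factorial_succ, pow_succ]
    field_simp
    ring

lemma odd_term_bound (y : ℝ) (hy : 0 < y) (j : ℕ) :
    cConst ((2*j+1 : ℕ) : ℝ) * y^(2*j+1) / (2*j+1).factorial ≤
      Real.sqrt (π/2) * y * ((y^2/8)^j / j.factorial) := by
  rcases Nat.eq_zero_or_pos j with rfl | hj
  · simp only [Nat.mul_zero, Nat.zero_add, pow_zero, pow_one, Nat.factorial_one, Nat.factorial_zero]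
    have h1 : cConst ((1:ℕ):ℝ) = 1 := by simp [cConst]
    rw [h1]
    have : (1:ℝ) ≤ Real.sqrt (π/2) := by
      rw [show (1:ℝ) = Real.sqrt 1 by simp]
      exact Real.sqrt_le_sqrt (by nlinarith [Real.pi_gt_three])
    simp only [Nat.cast_one, div_one]
    nlinarith
  · -- exact computation
    have hne : ((2*j+1 : ℕ) : ℝ) ≠ 1 := by
      push_cast; intro h; have : (1:ℝ) ≤ (j:ℝ) := by exact_mod_cast hj
      nlinarith
    have hc : cConst ((2*j+1 : ℕ) : ℝ)
        = (Real.sqrt 2 * 2^j)⁻¹ * (2*j+1) * (Real.sqrt π * (2*j).factorial / (4^j * j.factorial)) := by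
      rw [cConst, if_neg hne, two_rpow_neg_half, sqrt_two_pow_odd]
      have harg : ((2*j+1 : ℕ) : ℝ)/2 = (j : ℝ) + 1/2 := by push_cast; ring
      rw [harg, Gamma_nat_add_half']
      push_cast; ring
    rw [hc]
    have hfac : ((2*j+1).factorial : ℝ) = (2*j+1) * (2*j).factorial := by
      rw [Nat.factorial_succ]; push_cast; ring
    have h8 : ((y^2/8)^j : ℝ) = y^(2*j) / (2^j * 4^j) := by
      rw [div_pow, ← pow_mul]
      norm_num [show (8:ℝ)^j = 2^j * 4^j by rw [← mul_pow]; norm_num]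
    have hsp : Real.sqrt π / Real.sqrt 2 = Real.sqrt (π/2) := by
      rw [← Real.sqrt_div Real.pi_pos.le]
    have hpos2 : (0:ℝ) < Real.sqrt 2 := by positivity
    have hposp : (0:ℝ) < Real.sqrt π := Real.sqrt_pos.mpr Real.pi_pos
    have hf2 : (0:ℝ) < ((2*j).factorial : ℝ) := by positivity
    have hjf : (0:ℝ) < (j.factorial : ℝ) := by positivity
    apply le_of_eq
    rw [hfac, h8, ← hsp]
    have hy2 : y^(2*j+1) = y^(2*j) * y := pow_succ y (2*j)
    rw [hy2]
    field_simp

lemma even_term_bound (y : ℝ) (hy : 0 < y) (j : ℕ) :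
    cConst ((2*(j+1) : ℕ) : ℝ) * y^(2*(j+1)) / (2*(j+1)).factorial ≤
      2*Real.sqrt (y^2/8) * ((y^2/8)^(j+1) / (j+1).factorial)
      + 2*Real.sqrt (y^2/8) * ((y^2/8)^j / j.factorial) := by
  set m := j + 1 with hm
  have hm1 : 1 ≤ m := Nat.le_add_left 1 j
  set u := y^2/8 with hu
  set s := Real.sqrt u with hs
  have hupos : 0 < u := by positivity
  have hspos : 0 < s := Real.sqrt_pos.mpr hupos
  have hs2 : s^2 = u := Real.sq_sqrt hupos.le
  have hBpos : (0:ℝ) < (Nat.centralBinom m : ℝ) := by exact_mod_cast Nat.centralBinom_pos m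
  set B : ℝ := (Nat.centralBinom m : ℝ) with hB
  have hBfac : ((2*m).factorial : ℝ) = B * m.factorial * m.factorial := by
    rw [hB]
    have h := Nat.choose_mul_factorial_mul_factorial (show m ≤ 2*m by omega)
    have h2 : 2*m - m = m := by omega
    rw [h2] at h
    have : (Nat.centralBinom m) * m.factorial * m.factorial = (2*m).factorial := h
    exact_mod_cast this.symm
  have hsqrt : (4:ℝ)^m ≤ 2 * Real.sqrt m * B := by
    have h16 : ((16:ℝ))^m ≤ 4 * (m:ℝ) * B^2 := by
      rw [hB]; exact_mod_cast sixteen_pow_le m hm1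
    have hmn : (0:ℝ) ≤ (m:ℝ) := by positivity
    have heq : (4:ℝ) * (m:ℝ) * B^2 = (2*Real.sqrt m*B)^2 := by
      rw [mul_pow, mul_pow, Real.sq_sqrt hmn]; ring
    calc (4:ℝ)^m = Real.sqrt ((4^m)^2) := (Real.sqrt_sq (by positivity)).symm
      _ = Real.sqrt ((16:ℝ)^m) := by
          rw [show (16:ℝ)^m = (4^m)^2 by rw [← pow_mul, show (16:ℝ) = 4^2 by norm_num, ← pow_mul, mul_comm]]
      _ ≤ Real.sqrt (4 * (m:ℝ) * B^2) := Real.sqrt_le_sqrt h16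
      _ = Real.sqrt ((2*Real.sqrt m*B)^2) := by rw [heq]
      _ = 2*Real.sqrt m*B := Real.sqrt_sq (by positivity)
  have hcConst : cConst ((2*m:ℕ):ℝ) = (2^m)⁻¹ * (2*m) * j.factorial := by
    have hne : ((2*m : ℕ) : ℝ) ≠ 1 := by
      push_cast; intro h
      have : (1:ℝ) ≤ (m:ℝ) := by exact_mod_cast hm1
      nlinarith
    rw [cConst, if_neg hne]
    have h1 : (2:ℝ) ^ (-((2*m:ℕ):ℝ)/2) = ((2:ℝ)^m)⁻¹ := by
      rw [two_rpow_neg_half, sqrt_two_pow_even]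
    have harg : ((2*m:ℕ):ℝ)/2 = (j:ℝ) + 1 := by push_cast [hm]; ring
    rw [h1, harg, Real.Gamma_nat_eq_factorial]
    push_cast; ring
  -- step 1
  have hmjf : ((m:ℝ)) * j.factorial = m.factorial := by
    rw [hm]; exact_mod_cast (Nat.factorial_succ j).symm
  have hfpos : (0:ℝ) < m.factorial := by positivity
  have hjfpos : (0:ℝ) < j.factorial := by positivity
  have h8 : (8:ℝ)^m = 2^m * 4^m := by rw [← mul_pow]; norm_num
  have hum : u^m = y^(2*m) / 8^m := by
    rw [hu, div_pow, ← pow_mul]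
  have step1 : cConst ((2*m:ℕ):ℝ) * y^(2*m) / (2*m).factorial
      ≤ 4 * Real.sqrt m * (u^m / m.factorial) := by
    rw [hcConst, hBfac]
    rw [show 4 * Real.sqrt m * (u^m / m.factorial)
        = (4 * Real.sqrt m * y^(2*m)) / (8^m * m.factorial) by rw [hum]; field_simp]
    rw [div_le_div_iff₀ (by positivity) (by positivity)]
    have key : (2:ℝ)*4^m ≤ 4*Real.sqrt m*B := by nlinarith [hsqrt]
    calc (2^m:ℝ)⁻¹ * (2*m) * j.factorial * y^(2*m) * (8^m * m.factorial)
        = (2*4^m) * ((m:ℝ)*j.factorial) * y^(2*m) * m.factorial * ((2^m)⁻¹ * 2^m) := by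
          rw [h8]; ring
      _ = (2*4^m) * (m.factorial * y^(2*m) * m.factorial) := by
          rw [hmjf, inv_mul_cancel₀ (by positivity : ((2:ℝ)^m) ≠ 0)]; ring
      _ ≤ (4*Real.sqrt m*B) * (m.factorial * y^(2*m) * m.factorial) := by
          apply mul_le_mul_of_nonneg_right key (by positivity)
      _ = 4 * Real.sqrt m * y^(2*m) * (B * m.factorial * m.factorial) := by ring

  -- step 2
  have step2 : 4 * Real.sqrt m * (u^m / m.factorial)
      ≤ 2*s * (u^m / m.factorial) + 2*s * (u^j / j.factorial) := by
    have hamgm : 4 * Real.sqrt m * s ≤ 2*s^2 + 2*(m:ℝ) := by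
      have h := sq_nonneg (s - Real.sqrt m)
      have hsm : Real.sqrt m ^ 2 = (m:ℝ) := Real.sq_sqrt (by positivity)
      nlinarith
    -- 4√m ≤ 2s + 2m/s ; multiply by u^m/m!
    have hx : 4 * Real.sqrt m ≤ 2*s + 2*(m:ℝ)/s := by
      rw [← sub_nonneg] at hamgm ⊢
      have := div_nonneg hamgm hspos.le
      calc (0:ℝ) ≤ (2*s^2 + 2*m - 4*Real.sqrt m * s)/s := this
        _ = 2*s + 2*(m:ℝ)/s - 4*Real.sqrt m := by field_simp
    have humpos : 0 < u^m / m.factorial := by positivity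
    calc 4 * Real.sqrt m * (u^m / m.factorial)
        ≤ (2*s + 2*(m:ℝ)/s) * (u^m / m.factorial) := by
          apply mul_le_mul_of_nonneg_right hx humpos.le
      _ = 2*s * (u^m / m.factorial) + 2*(m:ℝ)/s * (u^m / m.factorial) := by ring
      _ = 2*s * (u^m / m.factorial) + 2*s * (u^j / j.factorial) := by
          have hmu : u^m = u * u^j := by rw [hm, pow_succ]; ring
          have haux : 2*(m:ℝ)/s * (u^m / m.factorial) = 2*s*(u^j/j.factorial) := by
            rw [hmu, ← hmjf, ← hs2]
            field_simp
          rw [haux]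
  calc cConst ((2*m:ℕ):ℝ) * y^(2*m) / (2*m).factorial
      ≤ 4 * Real.sqrt m * (u^m / m.factorial) := step1
    _ ≤ 2*s * (u^m / m.factorial) + 2*s * (u^j / j.factorial) := step2

/-- Chernoff-type tail bound from the proof of Theorem 5: if
`E[Zⁿ] ≤ c(n) Kⁿ` for all `n ≥ 1`, then
`P(Z ≥ ε/2) ≤ (1 + 4√(2π) ε/K) e^{−ε²/(2K²)}`. -/
theorem tail_bound_from_moment_bounds
    {Ω : Type*} [MeasurableSpace Ω] (μ : Measure Ω) [IsProbabilityMeasure μ]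
    (Z : Ω → ℝ) (hZmeas : Measurable Z) (hZnonneg : ∀ ω, 0 ≤ Z ω)
    (K : ℝ) (hK : 0 < K)
    (hmom : ∀ n : ℕ, 1 ≤ n →
      Integrable (fun ω => Z ω ^ n) μ ∧
        (∫ ω, Z ω ^ n ∂μ) ≤ cConst n * K ^ n)
    (ε : ℝ) (hε : 0 < ε) :
    μ {ω | Z ω ≥ ε / 2} ≤
      ENNReal.ofReal ((1 + 4 * Real.sqrt (2 * Real.pi) * ε / K) *
        Real.exp (-ε ^ 2 / (2 * K ^ 2))) := by
  set τ : ℝ := 2 * ε / K^2 with hτdef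
  set t : ℝ := ε / 2 with htdef
  set y : ℝ := 2 * ε / K with hydef
  have hτpos : 0 < τ := by positivity
  have hypos : 0 < y := by positivity
  have hτK : τ * K = y := by rw [hτdef, hydef]; field_simp
  set u : ℝ := y^2/8 with hudef
  set s : ℝ := Real.sqrt u with hsdef
  have hupos : 0 < u := by positivity
  have hspos : 0 < s := Real.sqrt_pos.mpr hupos
  -- the integrand family
  set f : ℕ → Ω → ℝ := fun n ω => (τ * Z ω)^n / n.factorial with hfdef
  have hf_nonneg : ∀ n ω, 0 ≤ f n ω := fun n ω => by
    have : 0 ≤ τ * Z ω := mul_nonneg hτpos.le (hZnonneg ω)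
    positivity
  have hf_int : ∀ n, Integrable (f n) μ := by
    intro n
    rcases Nat.eq_zero_or_pos n with rfl | hn
    · simp only [hfdef, pow_zero, Nat.factorial_zero]
      simpa using integrable_const (1:ℝ)
    · have : f n = fun ω => (τ^n / n.factorial) * Z ω ^ n := by
        funext ω; simp only [hfdef, mul_pow]; ring
      rw [this]
      exact ((hmom n hn).1.const_mul _)
  have hf_integral : ∀ n, 1 ≤ n → (∫ ω, f n ω ∂μ) ≤ cConst n * y^n / n.factorial := by
    intro n hn
    have h1 : (∫ ω, f n ω ∂μ) = (τ^n / n.factorial) * ∫ ω, Z ω ^ n ∂μ := by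
      rw [← MeasureTheory.integral_const_mul]
      congr 1; funext ω; simp only [hfdef, mul_pow]; ring
    rw [h1]
    have h2 := (hmom n hn).2
    have hcK : 0 ≤ τ^n / n.factorial := by positivity
    calc (τ^n / n.factorial) * ∫ ω, Z ω ^ n ∂μ
        ≤ (τ^n / n.factorial) * (cConst n * K^n) := by
          apply mul_le_mul_of_nonneg_left h2 hcK
      _ = cConst n * (τ*K)^n / n.factorial := by rw [mul_pow]; ring
      _ = cConst n * y^n / n.factorial := by rw [hτK]
  set g : ℕ → ℝ≥0∞ := fun n => ENNReal.ofReal (∫ ω, f n ω ∂μ) with hgdef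
  have hg0 : g 0 = 1 := by
    simp only [hgdef, hfdef, pow_zero, Nat.factorial_zero, Nat.cast_one, div_one]
    simp only [MeasureTheory.integral_const, measure_univ, ENNReal.toReal_one, probReal_univ, smul_eq_mul,
      mul_one, ENNReal.ofReal_one]
  -- MGF identity
  have hmeas_f : ∀ n, Measurable fun ω => ENNReal.ofReal (f n ω) := by
    intro n
    exact (((hZmeas.const_mul τ).pow_const n).div_const _).ennreal_ofReal
  have hMGF : (∫⁻ ω, ENNReal.ofReal (Real.exp (τ * Z ω)) ∂μ) = ∑' n, g n := by
    have hpt : ∀ ω, ENNReal.ofReal (Real.exp (τ * Z ω)) = ∑' n, ENNReal.ofReal (f n ω) := by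
      intro ω
      have hexp : Real.exp (τ * Z ω) = ∑' n : ℕ, (τ * Z ω)^n / n.factorial := by
        rw [Real.exp_eq_exp_ℝ, NormedSpace.exp_eq_tsum_div]
      rw [hexp]
      exact ENNReal.ofReal_tsum_of_nonneg (fun n => hf_nonneg n ω)
        (Real.summable_pow_div_factorial _)
    calc (∫⁻ ω, ENNReal.ofReal (Real.exp (τ * Z ω)) ∂μ)
        = ∫⁻ ω, ∑' n, ENNReal.ofReal (f n ω) ∂μ := by
          apply lintegral_congr; intro ω; exact hpt ω
      _ = ∑' n, ∫⁻ ω, ENNReal.ofReal (f n ω) ∂μ :=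
          lintegral_tsum (fun n => (hmeas_f n).aemeasurable)
      _ = ∑' n, g n := by
          congr 1; funext n
          rw [hgdef]
          exact (ofReal_integral_eq_lintegral_ofReal (hf_int n)
            (Filter.Eventually.of_forall (fun ω => hf_nonneg n ω))).symm
  -- real series facts
  have hsumu : Summable (fun n : ℕ => u^n / n.factorial) := Real.summable_pow_div_factorial u
  have hexpu : (∑' n : ℕ, u^n / n.factorial) = Real.exp u := by
    rw [Real.exp_eq_exp_ℝ, NormedSpace.exp_eq_tsum_div]
  have hshift_sum : Summable (fun k : ℕ => u^(k+1)/(k+1).factorial) :=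
    hsumu.comp_injective (fun a b h => by omega)
  have hshift : (∑' k : ℕ, u^(k+1)/(k+1).factorial) = Real.exp u - 1 := by
    have h := hsumu.tsum_eq_zero_add
    rw [hexpu] at h
    simp only [pow_zero, Nat.factorial_zero, Nat.cast_one, div_one] at h
    linarith
  have he1 : 1 ≤ Real.exp u := by
    rw [show (1:ℝ) = Real.exp 0 by simp]
    exact Real.exp_le_exp.mpr hupos.le
  have hA_nonneg : 0 ≤ 2*s*(Real.exp u - 1) + 2*s*Real.exp u := by
    have := Real.exp_pos u
    nlinarith
  have hB_nonneg : 0 ≤ Real.sqrt (π/2) * y * Real.exp u := by positivity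
  -- odd part
  have hodd : (∑' k : ℕ, g (2*k+1)) ≤
      ENNReal.ofReal (Real.sqrt (π/2) * y * Real.exp u) := by
    calc (∑' k : ℕ, g (2*k+1))
        ≤ ∑' k : ℕ, ENNReal.ofReal (Real.sqrt (π/2) * y * (u^k/k.factorial)) := by
          apply ENNReal.tsum_le_tsum
          intro k
          apply ENNReal.ofReal_le_ofReal
          calc (∫ ω, f (2*k+1) ω ∂μ) ≤ cConst (2*k+1 : ℕ) * y^(2*k+1) / (2*k+1).factorial :=
                hf_integral (2*k+1) (by omega)
            _ ≤ Real.sqrt (π/2) * y * ((y^2/8)^k/k.factorial) := odd_term_bound y hypos k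
      _ = ENNReal.ofReal (∑' k : ℕ, Real.sqrt (π/2) * y * (u^k/k.factorial)) := by
          refine (ENNReal.ofReal_tsum_of_nonneg (fun k => by positivity) ?_).symm
          exact hsumu.mul_left _
      _ = ENNReal.ofReal (Real.sqrt (π/2) * y * Real.exp u) := by
          rw [show (fun k : ℕ => Real.sqrt (π/2) * y * (u^k/k.factorial))
              = fun k : ℕ => (Real.sqrt (π/2) * y) * (u^k/k.factorial) by funext k; ring,
            tsum_mul_left, hexpu]
  -- even part
  have heven' : (∑' k : ℕ, g (2*(k+1))) ≤
      ENNReal.ofReal (2*s*(Real.exp u - 1) + 2*s*Real.exp u) := by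
    calc (∑' k : ℕ, g (2*(k+1)))
        ≤ ∑' k : ℕ, ENNReal.ofReal (2*s*(u^(k+1)/(k+1).factorial) + 2*s*(u^k/k.factorial)) := by
          apply ENNReal.tsum_le_tsum
          intro k
          apply ENNReal.ofReal_le_ofReal
          calc (∫ ω, f (2*(k+1)) ω ∂μ)
              ≤ cConst (2*(k+1) : ℕ) * y^(2*(k+1)) / (2*(k+1)).factorial :=
                hf_integral (2*(k+1)) (by omega)
            _ ≤ 2*Real.sqrt (y^2/8) * ((y^2/8)^(k+1)/(k+1).factorial)
                + 2*Real.sqrt (y^2/8) * ((y^2/8)^k/k.factorial) := even_term_bound y hypos k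
      _ = ENNReal.ofReal (∑' k : ℕ, (2*s*(u^(k+1)/(k+1).factorial) + 2*s*(u^k/k.factorial))) := by
          refine (ENNReal.ofReal_tsum_of_nonneg (fun k => by positivity) ?_).symm
          exact (hshift_sum.mul_left _).add (hsumu.mul_left _)
      _ = ENNReal.ofReal (2*s*(Real.exp u - 1) + 2*s*Real.exp u) := by
          rw [Summable.tsum_add (hshift_sum.mul_left _) (hsumu.mul_left _),
            tsum_mul_left, tsum_mul_left, hshift, hexpu]
  have heven : (∑' k : ℕ, g (2*k)) ≤
      1 + ENNReal.ofReal (2*s*(Real.exp u - 1) + 2*s*Real.exp u) := by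
    have hsplit : (∑' k : ℕ, g (2*k)) = g (2*0) + ∑' k : ℕ, g (2*(k+1)) :=
      tsum_eq_zero_add' (f := fun k => g (2*k)) ENNReal.summable
    rw [hsplit]
    have h0 : g (2*0) = 1 := by norm_num [hg0]
    rw [h0]
    exact add_le_add_right heven' 1
  set S : ℝ := 1 + (2*s*(Real.exp u - 1) + 2*s*Real.exp u) + Real.sqrt (π/2) * y * Real.exp u
    with hSdef
  have htotal : (∑' n, g n) ≤ ENNReal.ofReal S := by
    rw [← tsum_even_add_odd ENNReal.summable ENNReal.summable]
    calc (∑' k : ℕ, g (2*k)) + (∑' k : ℕ, g (2*k+1))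
        ≤ (1 + ENNReal.ofReal (2*s*(Real.exp u - 1) + 2*s*Real.exp u))
          + ENNReal.ofReal (Real.sqrt (π/2) * y * Real.exp u) := add_le_add heven hodd
      _ = ENNReal.ofReal S := by
          rw [hSdef, ← ENNReal.ofReal_one, ← ENNReal.ofReal_add (by norm_num) hA_nonneg,
            ← ENNReal.ofReal_add (by positivity) hB_nonneg]
  -- Markov
  have hSpos : 0 < S := by rw [hSdef]; nlinarith [hA_nonneg, hB_nonneg]
  have hmarkov : ENNReal.ofReal (Real.exp (τ * t)) * μ {ω | Z ω ≥ t} ≤ ENNReal.ofReal S := by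
    have hsub : {ω | Z ω ≥ t} ⊆
        {ω | ENNReal.ofReal (Real.exp (τ * t)) ≤ ENNReal.ofReal (Real.exp (τ * Z ω))} := by
      intro ω hω
      exact ENNReal.ofReal_le_ofReal (Real.exp_le_exp.mpr
        (mul_le_mul_of_nonneg_left hω hτpos.le))
    calc ENNReal.ofReal (Real.exp (τ * t)) * μ {ω | Z ω ≥ t}
        ≤ ENNReal.ofReal (Real.exp (τ * t)) *
            μ {ω | ENNReal.ofReal (Real.exp (τ * t)) ≤ ENNReal.ofReal (Real.exp (τ * Z ω))} :=
          mul_le_mul_right (measure_mono hsub) _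
      _ ≤ ∫⁻ ω, ENNReal.ofReal (Real.exp (τ * Z ω)) ∂μ :=
          mul_meas_ge_le_lintegral₀
            ((hZmeas.const_mul τ).exp.ennreal_ofReal.aemeasurable) _
      _ = ∑' n, g n := hMGF
      _ ≤ ENNReal.ofReal S := htotal
  have hc_ne0 : ENNReal.ofReal (Real.exp (τ * t)) ≠ 0 := by
    simp [ENNReal.ofReal_eq_zero, not_le, Real.exp_pos]
  have hc_netop : ENNReal.ofReal (Real.exp (τ * t)) ≠ ⊤ := ENNReal.ofReal_ne_top
  have hmain : μ {ω | Z ω ≥ t} ≤ ENNReal.ofReal (Real.exp (-(τ * t)) * S) := by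
    have hinv : (ENNReal.ofReal (Real.exp (τ * t)))⁻¹ = ENNReal.ofReal (Real.exp (-(τ * t))) := by
      rw [Real.exp_neg, ← ENNReal.ofReal_inv_of_pos (Real.exp_pos _)]
    calc μ {ω | Z ω ≥ t}
        = (ENNReal.ofReal (Real.exp (τ * t)))⁻¹ *
            (ENNReal.ofReal (Real.exp (τ * t)) * μ {ω | Z ω ≥ t}) := by
          rw [← mul_assoc, ENNReal.inv_mul_cancel hc_ne0 hc_netop, one_mul]
      _ ≤ (ENNReal.ofReal (Real.exp (τ * t)))⁻¹ * ENNReal.ofReal S :=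
          mul_le_mul_right hmarkov _
      _ = ENNReal.ofReal (Real.exp (-(τ * t)) * S) := by
          rw [hinv, ← ENNReal.ofReal_mul (Real.exp_pos _).le]
  refine hmain.trans (ENNReal.ofReal_le_ofReal ?_)
  -- final real inequality
  have hτt : τ * t = 2*u := by rw [hτdef, htdef, hudef, hydef]; field_simp; ring
  have hut : -ε^2/(2*K^2) = -u := by rw [hudef, hydef]; field_simp; ring
  rw [hτt, hut]
  have hexp2 : Real.exp (-(2*u)) * Real.exp u = Real.exp (-u) := by
    rw [← Real.exp_add]; ring_nf
  have h2 : Real.exp (-(2*u)) * (1-2*s) ≤ Real.exp (-u) := by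
    have ha := Real.exp_pos (-(2*u))
    have hb := Real.exp_pos (-u)
    have hab : Real.exp (-(2*u)) ≤ Real.exp (-u) := Real.exp_le_exp.mpr (by linarith)
    nlinarith [mul_pos ha hspos]
  have h8 : Real.sqrt 8 = 2 * Real.sqrt 2 := by
    rw [show (8:ℝ) = 4*2 by norm_num, Real.sqrt_mul (by norm_num : (0:ℝ) ≤ 4),
      show Real.sqrt 4 = 2 by
        rw [show (4:ℝ) = 2^2 by norm_num, Real.sqrt_sq (by norm_num : (0:ℝ) ≤ 2)]]
  have hsy : 4 * s = Real.sqrt 2 * y := by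
    rw [hsdef, hudef, Real.sqrt_div (by positivity) 8, Real.sqrt_sq hypos.le, h8]
    have h2pos : (0:ℝ) < Real.sqrt 2 := by positivity
    field_simp
    nlinarith [Real.sq_sqrt (show (0:ℝ) ≤ 2 by norm_num)]
  have e1 : Real.sqrt 2 ≤ Real.sqrt (2*π) := Real.sqrt_le_sqrt (by nlinarith [Real.pi_gt_three])
  have e2 : Real.sqrt (π/2) ≤ Real.sqrt (2*π) := Real.sqrt_le_sqrt (by nlinarith [Real.pi_gt_three])
  have h3 : 4*s + Real.sqrt (π/2) * y ≤ 4 * Real.sqrt (2*π) * ε / K := by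
    have hky : 4 * Real.sqrt (2*π) * ε / K = 2 * Real.sqrt (2*π) * y := by
      rw [hydef]; field_simp; ring
    rw [hky, hsy]
    nlinarith [hypos]
  calc Real.exp (-(2*u)) * S
      = Real.exp (-(2*u)) * (1-2*s)
        + (4*s + Real.sqrt (π/2)*y) * (Real.exp (-(2*u)) * Real.exp u) := by
        rw [hSdef]; ring
    _ = Real.exp (-(2*u)) * (1-2*s) + (4*s + Real.sqrt (π/2)*y) * Real.exp (-u) := by
        rw [hexp2]
    _ ≤ Real.exp (-u) + (4 * Real.sqrt (2*π) * ε / K) * Real.exp (-u) := by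
        refine add_le_add h2 (mul_le_mul_of_nonneg_right h3 (Real.exp_pos _).le)
    _ = (1 + 4 * Real.sqrt (2*π) * ε / K) * Real.exp (-u) := by ring
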